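/- Let D(r,s) be the covariance double contour integral (see context). For all integers r, s ≥ 1 one has the explicit evaluation D(r,s) = Σ_{n=1}^{s} n² · (r−1)! · (s−1)! / ( (r+n)! · (s−n)! ). In particular D(1,1) = 1/2, D(2,1) = 1/6, D(1,2) = 7/6 and D(2,2) = 1/3. -/

import Mathlib

open MeasureTheory Filter Finset

/-- The covariance double contour integral `D(r,s)` of slowed `t`-TASEP:
`D(r,s) = (1/(4π²)) ∮_{|z|=R} ∮_{|w|=ρ} (w/(z−w)) (r!s!/(z^r w^s)) e^{z+w} (1−z/r)(1−w/s) (dz/z)(dw/w)`,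
with both circles centered at the origin, traversed counterclockwise, and the inner
integral in `w` performed first. -/
noncomputable def covD (r s : ℕ) (R ρ : ℝ) : ℂ :=
  (1 / (4 * (Real.pi : ℂ) ^ 2)) *
    ∮ z in C(0, R),
      (∮ w in C(0, ρ),
        w / (z - w) * ((r.factorial : ℂ) * (s.factorial : ℂ) / (z ^ r * w ^ s)) *
          Complex.exp (z + w) * (1 - z / (r : ℂ)) * (1 - w / (s : ℂ)) / w) / z

section Helpers

open Complex Metric

-- basic linearity helpers
lemma circleIntegral_finset_sum {ι : Type*} (t : Finset ι) (f : ι → ℂ → ℂ) (c : ℂ) (R : ℝ)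
    (h : ∀ i ∈ t, CircleIntegrable (f i) c R) :
    (∮ z in C(c, R), ∑ i ∈ t, f i z) = ∑ i ∈ t, ∮ z in C(c, R), f i z := by
  simp only [circleIntegral, Finset.smul_sum]
  rw [intervalIntegral.integral_finset_sum]
  exact fun i hi => (h i hi).out

lemma circleIntegral_add {f g : ℂ → ℂ} {c : ℂ} {R : ℝ} (hf : CircleIntegrable f c R)
    (hg : CircleIntegrable g c R) :
    (∮ z in C(c, R), (f z + g z)) = (∮ z in C(c, R), f z) + ∮ z in C(c, R), g z := by
  simp only [circleIntegral, smul_add]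
  exact intervalIntegral.integral_add hf.out hg.out

lemma integral_zero_of_diff {ρ : ℝ} (hρ : 0 ≤ ρ) {f : ℂ → ℂ}
    (h : ∀ w ∈ closedBall (0:ℂ) ρ, DifferentiableAt ℂ f w) : (∮ w in C(0, ρ), f w) = 0 :=
  Complex.circleIntegral_eq_zero_of_differentiable_on_off_countable hρ Set.countable_empty
    (fun w hw => (h w hw).continuousAt.continuousWithinAt)
    (fun w hw => h w (ball_subset_closedBall hw.1))

lemma ci_exp_zpow {ρ : ℝ} (hρ : 0 < ρ) (j : ℤ) :
    CircleIntegrable (fun w => Complex.exp w * w ^ j) 0 ρ := by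
  refine ContinuousOn.circleIntegrable hρ.le fun w hw => ?_
  have hw0 : w ≠ 0 := by
    rw [mem_sphere_zero_iff_norm] at hw
    intro h; rw [h] at hw; simp at hw; exact hρ.ne hw
  exact (Complex.continuous_exp.continuousAt.mul
    (continuousAt_zpow₀ w j (Or.inl hw0)) :
      ContinuousAt (fun w => Complex.exp w * w ^ j) w).continuousWithinAt

lemma E_nonneg {ρ : ℝ} (hρ : 0 < ρ) (k : ℕ) :
    (∮ w in C((0:ℂ), ρ), Complex.exp w * w ^ (k:ℤ)) = 0 := by
  have : ∀ w ∈ closedBall (0:ℂ) ρ,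
      DifferentiableAt ℂ (fun w : ℂ => Complex.exp w * w ^ (k:ℤ)) w := by
    intro w _
    simp only [zpow_natCast]
    exact (Complex.differentiable_exp w).mul (differentiableAt_pow k)
  exact Complex.circleIntegral_eq_zero_of_differentiable_on_off_countable hρ.le
    Set.countable_empty (fun w hw => ((this w hw).continuousAt).continuousWithinAt)
    (fun w hw => this w (ball_subset_closedBall hw.1))

lemma E_neg {ρ : ℝ} (hρ : 0 < ρ) : ∀ k : ℕ,
    (∮ w in C((0:ℂ), ρ), Complex.exp w * w ^ (-(k:ℤ)-1)) =
      2 * Real.pi * Complex.I / (Nat.factorial k) := by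
  intro k; induction k with
  | zero =>
      have h0 : (0:ℂ) ∈ ball (0:ℂ) ρ := by simpa using hρ
      have hc := (Complex.differentiable_exp.diffContOnCl
        (s := ball (0:ℂ) ρ)).circleIntegral_sub_inv_smul h0
      have hfun : (fun w : ℂ => Complex.exp w * w ^ (-(0:ℤ)-1)) =
          fun w : ℂ => (w - 0)⁻¹ • Complex.exp w := by
        funext w; simp [zpow_neg, mul_comm]
      simp only [Nat.cast_zero]
      rw [hfun, hc]
      simp
  | succ k ih =>
      set m : ℤ := -(k:ℤ) - 1 with hm
      have hm0 : (m:ℂ) ≠ 0 := by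
        simp only [hm]; push_cast; intro h
        have : (k:ℂ) + 1 = 0 := by linear_combination -h
        exact_mod_cast Nat.cast_add_one_ne_zero k this
      have hder : ∀ w ∈ sphere (0:ℂ) ρ, HasDerivWithinAt
          (fun w : ℂ => Complex.exp w * w ^ m)
          (Complex.exp w * w ^ m + (m:ℂ) * (Complex.exp w * w ^ (m-1)))
          (sphere (0:ℂ) ρ) w := by
        intro w hw
        have hw0 : w ≠ 0 := by
          rw [mem_sphere_zero_iff_norm] at hw
          intro h; rw [h] at hw; simp at hw; exact hρ.ne hw
        have := (Complex.hasDerivAt_exp w).mul (hasDerivAt_zpow m w (Or.inl hw0))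
        refine (HasDerivAt.hasDerivWithinAt ?_)
        exact this.congr_deriv (by ring)
      have h0 := circleIntegral.integral_eq_zero_of_hasDerivWithinAt hρ.le hder
      have ci1 : CircleIntegrable (fun w => Complex.exp w * w ^ m) 0 ρ := ci_exp_zpow hρ m
      have ci2 : CircleIntegrable (fun w => (m:ℂ) * (Complex.exp w * w ^ (m-1))) 0 ρ := by
        refine ContinuousOn.circleIntegrable hρ.le fun w hw => ?_
        have hw0 : w ≠ 0 := by
          rw [mem_sphere_zero_iff_norm] at hw
          intro h; rw [h] at hw; simp at hw; exact hρ.ne hw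
        exact ((continuousAt_const.mul (Complex.continuous_exp.continuousAt.mul
          (continuousAt_zpow₀ w (m-1) (Or.inl hw0)))) :
          ContinuousAt (fun w => (m:ℂ) * (Complex.exp w * w ^ (m-1))) w).continuousWithinAt
      rw [circleIntegral_add ci1 ci2, circleIntegral.integral_const_mul, ih] at h0
      have hm1 : m - 1 = -((k+1 : ℕ):ℤ) - 1 := by simp only [hm]; push_cast; ring
      rw [hm1] at h0
      have hk : ((k.factorial : ℂ)) ≠ 0 := by
        exact_mod_cast Nat.cast_ne_zero.mpr k.factorial_ne_zero
      have : (∮ w in C((0:ℂ), ρ), Complex.exp w * w ^ (-((k+1:ℕ):ℤ)-1)) =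
          -(2 * Real.pi * Complex.I / (Nat.factorial k)) / m := by
        field_simp at h0 ⊢
        linear_combination h0
      rw [this]
      have hmval : (m:ℂ) = -((k:ℂ)+1) := by simp only [hm]; push_cast; ring
      rw [hmval, Nat.factorial_succ]
      push_cast
      rw [neg_div_neg_eq, div_div]
      ring_nf

lemma coeff_inner {ρ : ℝ} (hρ : 0 < ρ) (s n : ℕ) (hs : 1 ≤ s) (hn : n < s) :
    (∮ w in C((0:ℂ), ρ), (Complex.exp w * w ^ ((n:ℤ)-(s:ℤ)) -
        (s:ℂ)⁻¹ * (Complex.exp w * w ^ ((n:ℤ)-(s:ℤ)+1)))) =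
      2 * Real.pi * Complex.I * (n+1) / (s * (Nat.factorial (s-1-n))) := by
  have ci2 : CircleIntegrable (fun w => (s:ℂ)⁻¹ * (Complex.exp w * w ^ ((n:ℤ)-(s:ℤ)+1))) 0 ρ := by
    have h := (ci_exp_zpow hρ ((n:ℤ)-(s:ℤ)+1))
    exact IntervalIntegrable.smul h ((s:ℂ)⁻¹)
  rw [circleIntegral.integral_sub (ci_exp_zpow hρ _) ci2,
    circleIntegral.integral_const_mul]
  obtain ⟨k, hsk⟩ : ∃ k, s = n + k + 1 := ⟨s - n - 1, by omega⟩
  have hrw : s - 1 - n = k := by omega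
  have hns : (n:ℤ) - (s:ℤ) = -(k:ℤ) - 1 := by omega
  rw [hrw, hns, E_neg hρ k]
  have hs0 : (s:ℂ) ≠ 0 := Nat.cast_ne_zero.mpr (by omega)
  have hkf : ((k.factorial : ℂ)) ≠ 0 := Nat.cast_ne_zero.mpr k.factorial_ne_zero
  have hsval : (s:ℂ) = (n:ℂ) + (k:ℂ) + 1 := by rw [hsk]; push_cast; ring
  cases k with
  | zero =>
      have h2 : (-((0:ℕ):ℤ) - 1 + 1) = ((0:ℕ):ℤ) := by simp
      rw [h2, E_nonneg hρ 0, mul_zero, sub_zero]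
      rw [hsval]
      push_cast
      simp only [Nat.factorial_zero, Nat.cast_one]
      have h4 : ((n:ℂ)+1) ≠ 0 := Nat.cast_add_one_ne_zero n
      have h5 : ((n:ℂ) + 0 + 1) ≠ 0 := by intro h; exact h4 (by linear_combination h)
      field_simp
      ring
  | succ k' =>
      have h2 : (-(((k'+1):ℕ):ℤ) - 1 + 1) = -(k':ℤ) - 1 := by push_cast; ring
      rw [h2, E_neg hρ k']
      have hkf' : ((k'.factorial : ℂ)) ≠ 0 := Nat.cast_ne_zero.mpr k'.factorial_ne_zero
      have hfs : (((k'+1).factorial : ℂ)) = ((k':ℂ)+1) * (k'.factorial : ℂ) := by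
        rw [Nat.factorial_succ]; push_cast; ring
      rw [hfs, hsval]
      have h1 : ((k':ℂ)+1) ≠ 0 := Nat.cast_add_one_ne_zero k'
      have h3 : ((n:ℂ) + ((k'+1:ℕ):ℂ) + 1) ≠ 0 := by
        push_cast; intro h
        exact Nat.cast_add_one_ne_zero (R := ℂ) (n + k' + 1) (by push_cast; linear_combination h)
      push_cast at h3 ⊢
      field_simp
      ring

lemma coeff_outer {R : ℝ} (hR : 0 < R) (r q : ℕ) (hr : 1 ≤ r) :
    (∮ z in C((0:ℂ), R), (Complex.exp z * z ^ (-(r:ℤ)-(q:ℤ)-2) -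
        (r:ℂ)⁻¹ * (Complex.exp z * z ^ (-(r:ℤ)-(q:ℤ)-1)))) =
      -(2 * Real.pi * Complex.I) * (q+1) / (r * (Nat.factorial (r+q+1))) := by
  have ci2 : CircleIntegrable (fun z => (r:ℂ)⁻¹ * (Complex.exp z * z ^ (-(r:ℤ)-(q:ℤ)-1))) 0 R :=
    IntervalIntegrable.smul (ci_exp_zpow hR (-(r:ℤ)-(q:ℤ)-1)) ((r:ℂ)⁻¹)
  rw [circleIntegral.integral_sub (ci_exp_zpow hR _) ci2,
    circleIntegral.integral_const_mul]
  have h1 : -(r:ℤ) - (q:ℤ) - 2 = -((r+q+1 : ℕ):ℤ) - 1 := by push_cast; ring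
  have h2 : -(r:ℤ) - (q:ℤ) - 1 = -((r+q : ℕ):ℤ) - 1 := by push_cast; ring
  rw [h1, E_neg hR (r+q+1), h2, E_neg hR (r+q)]
  have hr0 : (r:ℂ) ≠ 0 := Nat.cast_ne_zero.mpr (by omega)
  have hf1 : ((r+q).factorial : ℂ) ≠ 0 := Nat.cast_ne_zero.mpr (Nat.factorial_ne_zero _)
  have hfs : (((r+q+1).factorial : ℂ)) = ((r:ℂ)+(q:ℂ)+1) * ((r+q).factorial : ℂ) := by
    rw [Nat.factorial_succ]; push_cast; ring
  have h3 : ((r:ℂ)+(q:ℂ)+1) ≠ 0 := by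
    intro h
    exact Nat.cast_add_one_ne_zero (R := ℂ) (r + q) (by push_cast; linear_combination h)
  rw [hfs]
  field_simp
  ring

-- the partial fraction / geometric sum identity
lemma key_frac {z w : ℂ} (hz0 : z ≠ 0) (hw0 : w ≠ 0) (hzw : z - w ≠ 0) (s : ℕ) :
    (z - w)⁻¹ * ((w ^ s : ℂ))⁻¹ =
      (∑ n ∈ range s, z ^ (-(n:ℤ)-1) * w ^ ((n:ℤ)-(s:ℤ))) + z ^ (-(s:ℤ)) * (z - w)⁻¹ := by
  have hgeom : (∑ n ∈ range s, w ^ n * z ^ (s - 1 - n)) * (w - z) = w ^ s - z ^ s :=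
    geom_sum₂_mul w z s
  have hsum : (∑ n ∈ range s, z ^ (-(n:ℤ)-1) * w ^ ((n:ℤ)-(s:ℤ))) =
      (∑ n ∈ range s, w ^ n * z ^ (s-1-n)) * ((z^s)⁻¹ * (w^s)⁻¹) := by
    rw [Finset.sum_mul]
    refine Finset.sum_congr rfl fun n hn => ?_
    have hn' : n < s := Finset.mem_range.mp hn
    have h2 : (-(n:ℤ)-1) = ((s-1-n : ℕ) : ℤ) - (s:ℤ) := by omega
    rw [h2, zpow_sub₀ hz0, zpow_sub₀ hw0, zpow_natCast, zpow_natCast, zpow_natCast,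
      zpow_natCast]
    field_simp
  have hzs : (z:ℂ)^s ≠ 0 := pow_ne_zero _ hz0
  have hws : (w:ℂ)^s ≠ 0 := pow_ne_zero _ hw0
  have hwz : w - z ≠ 0 := fun h => hzw (by linear_combination -h)
  have hZ : z ^ (-(s:ℤ)) = (z ^ s)⁻¹ := by rw [zpow_neg, zpow_natCast]
  have hS : (∑ n ∈ range s, w ^ n * z ^ (s-1-n)) = (w^s - z^s) * (w-z)⁻¹ := by
    rw [← hgeom, mul_inv_cancel_right₀ hwz]
  rw [hsum, hS, hZ]
  field_simp
  ring

lemma inner_eval {ρ R : ℝ} (hρ : 0 < ρ) (hρR : ρ < R) (r s : ℕ) (hr : 1 ≤ r) (hs : 1 ≤ s)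
    (z : ℂ) (hz : z ∈ sphere (0:ℂ) R) :
    (∮ w in C(0, ρ),
        w / (z - w) * ((r.factorial : ℂ) * (s.factorial : ℂ) / (z ^ r * w ^ s)) *
          Complex.exp (z + w) * (1 - z / (r : ℂ)) * (1 - w / (s : ℂ)) / w)
    = ∑ n ∈ range s,
        (((r.factorial : ℂ) * (s.factorial : ℂ) * Complex.exp z * (1 - z / (r:ℂ)) *
            z ^ (-(r:ℤ))) * z ^ (-(n:ℤ)-1)) *
          (2 * Real.pi * Complex.I * (n+1) / (s * (Nat.factorial (s-1-n)))) := by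
  have hzR : ‖z‖ = R := mem_sphere_zero_iff_norm.mp hz
  have hR0 : 0 < R := hρ.trans hρR
  have hz0 : z ≠ 0 := by intro h; rw [h] at hzR; simp at hzR; exact hR0.ne hzR
  have hs0 : (s:ℂ) ≠ 0 := Nat.cast_ne_zero.mpr (by omega)
  have hr0 : (r:ℂ) ≠ 0 := Nat.cast_ne_zero.mpr (by omega)
  set C : ℂ := (r.factorial : ℂ) * (s.factorial : ℂ) * Complex.exp z * (1 - z / (r:ℂ)) *
    z ^ (-(r:ℤ)) with hC
  have hwsphere : ∀ w ∈ sphere (0:ℂ) ρ, w ≠ 0 ∧ z - w ≠ 0 := by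
    intro w hw
    have hwρ : ‖w‖ = ρ := mem_sphere_zero_iff_norm.mp hw
    constructor
    · intro h; rw [h] at hwρ; simp at hwρ; exact hρ.ne hwρ
    · intro h
      have : z = w := by linear_combination h
      rw [this, hwρ] at hzR; exact hρR.ne hzR
  have hEq : Set.EqOn
      (fun w : ℂ => w / (z - w) * ((r.factorial : ℂ) * (s.factorial : ℂ) / (z ^ r * w ^ s)) *
          Complex.exp (z + w) * (1 - z / (r : ℂ)) * (1 - w / (s : ℂ)) / w)
      (fun w : ℂ => (∑ n ∈ range s, (C * z ^ (-(n:ℤ)-1)) *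
          (Complex.exp w * w ^ ((n:ℤ)-(s:ℤ)) -
            (s:ℂ)⁻¹ * (Complex.exp w * w ^ ((n:ℤ)-(s:ℤ)+1)))) +
        (C * z ^ (-(s:ℤ))) * ((z - w)⁻¹ * (Complex.exp w * (1 - w / (s:ℂ)))))
      (sphere (0:ℂ) ρ) := by
    intro w hw
    obtain ⟨hw0, hzw⟩ := hwsphere w hw
    have hstep : w / (z - w) * ((r.factorial : ℂ) * (s.factorial : ℂ) / (z ^ r * w ^ s)) *
          Complex.exp (z + w) * (1 - z / (r : ℂ)) * (1 - w / (s : ℂ)) / w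
        = C * ((1 - w / (s:ℂ)) * Complex.exp w) * ((z - w)⁻¹ * ((w ^ s : ℂ))⁻¹) := by
      rw [hC, Complex.exp_add]
      have hzr : z ^ (-(r:ℤ)) = ((z:ℂ) ^ r)⁻¹ := by rw [zpow_neg, zpow_natCast]
      rw [hzr]
      have hww : w * w⁻¹ = 1 := mul_inv_cancel₀ hw0
      calc w / (z - w) * ((r.factorial : ℂ) * (s.factorial : ℂ) / (z ^ r * w ^ s)) *
            (Complex.exp z * Complex.exp w) * (1 - z / (r : ℂ)) * (1 - w / (s : ℂ)) / w
          = ((r.factorial : ℂ) * (s.factorial : ℂ) * (Complex.exp z * Complex.exp w) *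
              (1 - z / (r:ℂ)) * (1 - w / (s:ℂ))) *
              ((z - w)⁻¹ * (((z:ℂ)^r)⁻¹ * ((w:ℂ)^s)⁻¹)) * (w * w⁻¹) := by
            simp only [div_eq_mul_inv, mul_inv]
            ring
        _ = _ := by rw [hww]; ring
    show _ = _
    simp only
    rw [hstep, key_frac hz0 hw0 hzw s, mul_add, Finset.mul_sum]
    congr 1
    · refine Finset.sum_congr rfl fun n hn => ?_
      rw [zpow_add_one₀ hw0 ((n:ℤ)-(s:ℤ))]
      ring
    · ring
  rw [circleIntegral.integral_congr hρ.le hEq]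
  -- continuity helpers
  have hct : ∀ (j : ℤ), ContinuousOn (fun w : ℂ => Complex.exp w * w ^ j)
      (sphere (0:ℂ) ρ) := by
    intro j w hw
    obtain ⟨hw0, -⟩ := hwsphere w hw
    exact ((Complex.continuous_exp.continuousAt.mul
      (continuousAt_zpow₀ w j (Or.inl hw0))) :
        ContinuousAt (fun w => Complex.exp w * w ^ j) w).continuousWithinAt
  have hterm_int : ∀ n ∈ range s, CircleIntegrable
      (fun w : ℂ => (C * z ^ (-(n:ℤ)-1)) *
        (Complex.exp w * w ^ ((n:ℤ)-(s:ℤ)) -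
          (s:ℂ)⁻¹ * (Complex.exp w * w ^ ((n:ℤ)-(s:ℤ)+1)))) 0 ρ := by
    intro n _
    refine ContinuousOn.circleIntegrable hρ.le ?_
    exact continuousOn_const.mul ((hct _).sub (continuousOn_const.mul (hct _)))
  have hsum_int : CircleIntegrable
      (fun w : ℂ => ∑ n ∈ range s, (C * z ^ (-(n:ℤ)-1)) *
        (Complex.exp w * w ^ ((n:ℤ)-(s:ℤ)) -
          (s:ℂ)⁻¹ * (Complex.exp w * w ^ ((n:ℤ)-(s:ℤ)+1)))) 0 ρ := by
    refine ContinuousOn.circleIntegrable hρ.le ?_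
    refine continuousOn_finset_sum _ fun n _ => ?_
    exact continuousOn_const.mul ((hct _).sub (continuousOn_const.mul (hct _)))
  have hlast_int : CircleIntegrable
      (fun w : ℂ => (C * z ^ (-(s:ℤ))) *
        ((z - w)⁻¹ * (Complex.exp w * (1 - w / (s:ℂ))))) 0 ρ := by
    refine ContinuousOn.circleIntegrable hρ.le ?_
    refine continuousOn_const.mul (ContinuousOn.mul ?_ ?_)
    · exact (continuousOn_const.sub continuousOn_id).inv₀
        (fun w hw => (hwsphere w hw).2)
    · exact Complex.continuous_exp.continuousOn.mul
        (continuousOn_const.sub (continuousOn_id.div_const _))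
  rw [circleIntegral_add hsum_int hlast_int,
    circleIntegral_finset_sum (range s) _ _ _ hterm_int]
  have hlast : (∮ w in C((0:ℂ), ρ), (C * z ^ (-(s:ℤ))) *
      ((z - w)⁻¹ * (Complex.exp w * (1 - w / (s:ℂ))))) = 0 := by
    rw [circleIntegral.integral_const_mul]
    rw [integral_zero_of_diff hρ.le, mul_zero]
    intro w hw
    have hwball : ‖w‖ ≤ ρ := by simpa [mem_closedBall, dist_eq_norm] using hw
    have hzw : z - w ≠ 0 := by
      intro h
      have : z = w := by linear_combination h
      rw [this] at hzR
      exact absurd hzR (by intro hh; rw [hh] at hwball; linarith)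
    refine DifferentiableAt.mul ?_ ?_
    · exact ((differentiableAt_const z).sub differentiableAt_id).inv hzw
    · exact (Complex.differentiable_exp w).mul
        ((differentiableAt_const 1).sub (differentiableAt_id.div_const _))
  rw [hlast, add_zero]
  refine Finset.sum_congr rfl fun n hn => ?_
  rw [circleIntegral.integral_const_mul, coeff_inner hρ s n hs (Finset.mem_range.mp hn)]

lemma covD_eq (ρ R : ℝ) (hρ : 0 < ρ) (hρR : ρ < R) (r s : ℕ) (hr : 1 ≤ r) (hs : 1 ≤ s) :
    covD r s R ρ =
      ∑ n ∈ Finset.Icc 1 s,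
        (n : ℂ) ^ 2 * ((r - 1).factorial : ℂ) * ((s - 1).factorial : ℂ) /
          (((r + n).factorial : ℂ) * ((s - n).factorial : ℂ)) := by
  have hR0 : 0 < R := hρ.trans hρR
  rw [covD]
  have hOuter : Set.EqOn
      (fun z : ℂ => (∮ w in C(0, ρ),
        w / (z - w) * ((r.factorial : ℂ) * (s.factorial : ℂ) / (z ^ r * w ^ s)) *
          Complex.exp (z + w) * (1 - z / (r : ℂ)) * (1 - w / (s : ℂ)) / w) / z)
      (fun z : ℂ => ∑ n ∈ range s,
        ((r.factorial : ℂ) * (s.factorial : ℂ) *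
            (2 * Real.pi * Complex.I * (n+1) / (s * (Nat.factorial (s-1-n))))) *
          (Complex.exp z * z ^ (-(r:ℤ)-(n:ℤ)-2) -
            (r:ℂ)⁻¹ * (Complex.exp z * z ^ (-(r:ℤ)-(n:ℤ)-1))))
      (sphere (0:ℂ) R) := by
    intro z hz
    have hzR : ‖z‖ = R := mem_sphere_zero_iff_norm.mp hz
    have hz0 : z ≠ 0 := by intro h; rw [h] at hzR; simp at hzR; exact hR0.ne hzR
    simp only
    rw [inner_eval hρ hρR r s hr hs z hz, Finset.sum_div]
    refine Finset.sum_congr rfl fun n hn => ?_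
    have e4 : z ^ (-(r:ℤ)) * z ^ (-(n:ℤ)-1) * z⁻¹ = z ^ (-(r:ℤ)-(n:ℤ)-2) := by
      rw [← zpow_neg_one z, ← zpow_add₀ hz0, ← zpow_add₀ hz0]
      congr 1; ring
    have e3 : z ^ (-(r:ℤ)-(n:ℤ)-1) = z ^ (-(r:ℤ)-(n:ℤ)-2) * z := by
      rw [← zpow_add_one₀ hz0]
      congr 1; ring
    linear_combination
      ((r.factorial : ℂ) * (s.factorial : ℂ) * Complex.exp z * (1 - z / (r:ℂ)) *
        (2 * (Real.pi:ℂ) * Complex.I * (n+1) / (s * (Nat.factorial (s-1-n))))) * e4 +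
      ((r.factorial : ℂ) * (s.factorial : ℂ) * Complex.exp z * (r:ℂ)⁻¹ *
        (2 * (Real.pi:ℂ) * Complex.I * (n+1) / (s * (Nat.factorial (s-1-n))))) * e3
  rw [circleIntegral.integral_congr hR0.le hOuter]
  have hct : ∀ (j : ℤ), ContinuousOn (fun z : ℂ => Complex.exp z * z ^ j)
      (sphere (0:ℂ) R) := by
    intro j z hz
    have hz0 : z ≠ 0 := by
      intro h
      have := mem_sphere_zero_iff_norm.mp hz
      rw [h] at this; simp at this; exact hR0.ne this
    exact ((Complex.continuous_exp.continuousAt.mul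
      (continuousAt_zpow₀ z j (Or.inl hz0))) :
        ContinuousAt (fun z => Complex.exp z * z ^ j) z).continuousWithinAt
  rw [circleIntegral_finset_sum (range s) (fun n z =>
      ((r.factorial : ℂ) * (s.factorial : ℂ) *
          (2 * Real.pi * Complex.I * (n+1) / (s * (Nat.factorial (s-1-n))))) *
        (Complex.exp z * z ^ (-(r:ℤ)-(n:ℤ)-2) -
          (r:ℂ)⁻¹ * (Complex.exp z * z ^ (-(r:ℤ)-(n:ℤ)-1)))) _ _ (fun n _ =>
    ContinuousOn.circleIntegrable hR0.le
      (continuousOn_const.mul ((hct _).sub (continuousOn_const.mul (hct _)))))]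
  have hstep : ∀ n ∈ range s,
      ((r.factorial : ℂ) * (s.factorial : ℂ) *
          (2 * Real.pi * Complex.I * (n+1) / (s * (Nat.factorial (s-1-n))))) *
        (∮ z in C((0:ℂ), R), (Complex.exp z * z ^ (-(r:ℤ)-(n:ℤ)-2) -
            (r:ℂ)⁻¹ * (Complex.exp z * z ^ (-(r:ℤ)-(n:ℤ)-1)))) =
      ((r.factorial : ℂ) * (s.factorial : ℂ) *
          (2 * Real.pi * Complex.I * (n+1) / (s * (Nat.factorial (s-1-n))))) *
        (-(2 * Real.pi * Complex.I) * (n+1) / (r * (Nat.factorial (r+n+1)))) := by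
    intro n _
    rw [coeff_outer hR0 r n hr]
  -- rewrite each circle integral using coeff_outer
  have : (∑ n ∈ range s, ((r.factorial : ℂ) * (s.factorial : ℂ) *
        (2 * Real.pi * Complex.I * (n+1) / (s * (Nat.factorial (s-1-n))))) *
        (∮ z in C((0:ℂ), R), (Complex.exp z * z ^ (-(r:ℤ)-(n:ℤ)-2) -
            (r:ℂ)⁻¹ * (Complex.exp z * z ^ (-(r:ℤ)-(n:ℤ)-1))))) =
      ∑ n ∈ range s, ((r.factorial : ℂ) * (s.factorial : ℂ) *
        (2 * Real.pi * Complex.I * (n+1) / (s * (Nat.factorial (s-1-n))))) *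
        (-(2 * Real.pi * Complex.I) * (n+1) / (r * (Nat.factorial (r+n+1)))) :=
    Finset.sum_congr rfl hstep
  have hrw := Finset.sum_congr rfl (fun n hn => by
    rw [circleIntegral.integral_const_mul] :
    ∀ n ∈ range s, (∮ z in C((0:ℂ), R),
      ((r.factorial : ℂ) * (s.factorial : ℂ) *
          (2 * Real.pi * Complex.I * (n+1) / (s * (Nat.factorial (s-1-n))))) *
        (Complex.exp z * z ^ (-(r:ℤ)-(n:ℤ)-2) -
          (r:ℂ)⁻¹ * (Complex.exp z * z ^ (-(r:ℤ)-(n:ℤ)-1)))) =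
      ((r.factorial : ℂ) * (s.factorial : ℂ) *
          (2 * Real.pi * Complex.I * (n+1) / (s * (Nat.factorial (s-1-n))))) *
        (∮ z in C((0:ℂ), R), (Complex.exp z * z ^ (-(r:ℤ)-(n:ℤ)-2) -
          (r:ℂ)⁻¹ * (Complex.exp z * z ^ (-(r:ℤ)-(n:ℤ)-1)))))
  rw [hrw, this, Finset.mul_sum]

  -- convert Icc sum to range sum
  rw [← Finset.Ico_add_one_right_eq_Icc, Finset.sum_Ico_eq_sum_range]
  refine Finset.sum_congr rfl fun n hn => ?_
  have hn' : n < s := Finset.mem_range.mp hn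
  -- nat index rewrites
  have h1 : r + (1 + n) = r + n + 1 := by omega
  have h2 : s - (1 + n) = s - 1 - n := by omega
  rw [h1, h2]
  -- factorial identities
  have hrf : (r.factorial : ℂ) = (r:ℂ) * ((r-1).factorial : ℂ) := by
    rw [← Nat.mul_factorial_pred (by omega : r ≠ 0)]; push_cast; ring
  have hsf : (s.factorial : ℂ) = (s:ℂ) * ((s-1).factorial : ℂ) := by
    rw [← Nat.mul_factorial_pred (by omega : s ≠ 0)]; push_cast; ring
  rw [hrf, hsf]
  have hr0 : (r:ℂ) ≠ 0 := Nat.cast_ne_zero.mpr (by omega)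
  have hs0 : (s:ℂ) ≠ 0 := Nat.cast_ne_zero.mpr (by omega)
  have hπ : ((Real.pi : ℂ)) ≠ 0 := Complex.ofReal_ne_zero.mpr Real.pi_ne_zero
  have hf1 : ((s-1-n).factorial : ℂ) ≠ 0 := Nat.cast_ne_zero.mpr (Nat.factorial_ne_zero _)
  have hf2 : ((r+n+1).factorial : ℂ) ≠ 0 := Nat.cast_ne_zero.mpr (Nat.factorial_ne_zero _)
  have hcast : ((1 + n : ℕ) : ℂ) = (n:ℂ) + 1 := by push_cast; ring
  rw [hcast]
  have hI : Complex.I ^ 2 = -1 := Complex.I_sq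
  field_simp
  linear_combination (-4 * ((r-1).factorial : ℂ) * ((s-1).factorial : ℂ)) * hI

end Helpers

/-- Explicit residue evaluation of the covariance contour integral:
`D(r,s) = Σ_{n=1}^{s} n² (r−1)! (s−1)! / ((r+n)! (s−n)!)` for all `r, s ≥ 1`;
in particular `D(1,1) = 1/2`, `D(2,1) = 1/6`, `D(1,2) = 7/6`, `D(2,2) = 1/3`. -/
theorem covD_explicit (ρ R : ℝ) (hρ : 0 < ρ) (hρR : ρ < R) :
    (∀ r s : ℕ, 1 ≤ r → 1 ≤ s →
      covD r s R ρ =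
        ∑ n ∈ Finset.Icc 1 s,
          (n : ℂ) ^ 2 * ((r - 1).factorial : ℂ) * ((s - 1).factorial : ℂ) /
            (((r + n).factorial : ℂ) * ((s - n).factorial : ℂ))) ∧
    covD 1 1 R ρ = 1 / 2 ∧ covD 2 1 R ρ = 1 / 6 ∧
    covD 1 2 R ρ = 7 / 6 ∧ covD 2 2 R ρ = 1 / 3 := by
  have h : ∀ r s : ℕ, 1 ≤ r → 1 ≤ s →
      covD r s R ρ =
        ∑ n ∈ Finset.Icc 1 s,
          (n : ℂ) ^ 2 * ((r - 1).factorial : ℂ) * ((s - 1).factorial : ℂ) /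
            (((r + n).factorial : ℂ) * ((s - n).factorial : ℂ)) :=
    fun r s hr hs => covD_eq ρ R hρ hρR r s hr hs
  refine ⟨h, ?_, ?_, ?_, ?_⟩ <;>
    rw [h _ _ (by norm_num) (by norm_num)] <;>
    norm_num [Finset.sum_Icc_succ_top, Finset.Icc_self, Nat.factorial]
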